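/- arXiv:1905.12326 — 2 statements merged into one kernel-verified Lean document; each statement's English description precedes it below -/
import Mathlib

section
/- Fix β > 0 and a constant p ∈ (0,1]. Then log E[e^{-βH(σ)} e^{-βH(τ)}] = (1-p)β²/(4p) + β(|σ|² + |τ|²)/(2N) + (β²|στ|²/(4N²))·(1/p - 1) + O(1/N²)·((|σ|² + |τ|²)/N + 1), where the O(1/N²)-term is uniform over σ, τ ∈ {-1,+1}^N. -/
open MeasureTheory ProbabilityTheory Filter
open scoped Classical

noncomputable section

/-- The spin value `±1` associated to a Boolean. -/
def spin (b : Bool) : ℝ := if b then 1 else -1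

/-- The total magnetization `|σ| = σ₁ + ⋯ + σ_N` of a spin configuration. -/
def mag {N : ℕ} (σ : Fin N → Bool) : ℝ := ∑ i, spin (σ i)

/-- The overlap `|στ| = ∑ σᵢτᵢ` of two spin configurations. -/
def magPair {N : ℕ} (σ τ : Fin N → Bool) : ℝ := ∑ i, spin (σ i) * spin (τ i)

/-- The Hamiltonian `H(σ) = -(1/(2Np)) ∑_{i,j} ε_{i,j} σᵢ σⱼ` of the Ising model on the
directed Erdős–Rényi graph with edge indicators `ε`. -/
def hamil (N : ℕ) (p : ℝ) (ε : Fin N × Fin N → Bool) (σ : Fin N → Bool) : ℝ :=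
  -(1 / (2 * N * p)) * ∑ i : Fin N, ∑ j : Fin N,
    (if ε (i, j) then (1 : ℝ) else 0) * spin (σ i) * spin (σ j)

/-- The joint law of the i.i.d. Bernoulli(p) edge indicators `(ε_{i,j})_{i,j=1}^N`. -/
def bern (N : ℕ) (p : ℝ) : Measure (Fin N × Fin N → Bool) :=
  Measure.pi fun _ => (PMF.bernoulli (min 1 (Real.toNNReal p)) (min_le_left _ _)).toMeasure

/-- The generalized partition function `Z_N(β, g) = ∑_σ e^{-βH(σ)} g(|σ|/√N)`. -/
def ZNg (N : ℕ) (p β : ℝ) (g : ℝ → ℝ) (ε : Fin N × Fin N → Bool) : ℝ :=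
  ∑ σ : Fin N → Bool, Real.exp (-β * hamil N p ε σ) * g (mag σ / Real.sqrt N)

/-- The expectation `𝔼 Z_N(β, g)` over the randomness of the graph. -/
def EZNg (N : ℕ) (p β : ℝ) (g : ℝ → ℝ) : ℝ :=
  ∫ ε, ZNg N p β g ε ∂(bern N p)

/-- The Gaussian expectation `𝔼_ξ [g(ξ) e^{β ξ²/2}]` for a standard normal `ξ`. -/
def gaussExp (β : ℝ) (g : ℝ → ℝ) : ℝ :=
  ∫ x, g x * Real.exp (β * x ^ 2 / 2) ∂(gaussianReal 0 1)

set_option maxHeartbeats 1000000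

lemma spin_mul_self (b : Bool) : spin b * spin b = 1 := by cases b <;> norm_num [spin]

lemma abs_spin (b : Bool) : |spin b| = 1 := by cases b <;> norm_num [spin]


lemma taylor_log_aux (p x : ℝ) (hp0 : 0 < p) (hp1 : p ≤ 1) (hx : |x| ≤ 1/4) :
    |Real.log (1 - p + p * Real.exp x) -
      (p * x + p * (1 - p) / 2 * x ^ 2 + (p / 6 - p ^ 2 / 2 + p ^ 3 / 3) * x ^ 3)| ≤ 40 * x ^ 4 := by
  obtain ⟨hxl, hxr⟩ := abs_le.1 hx
  have hax : (0:ℝ) ≤ |x| := abs_nonneg x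
  have h2 : |x| ^ 2 ≤ 1/16 := by nlinarith
  have h3 : |x| ^ 3 ≤ 1/64 := by nlinarith
  have h4 : |x| ^ 4 ≤ 1/256 := by nlinarith
  have hx2 : x ^ 2 = |x| ^ 2 := (sq_abs x).symm
  have hx4 : x ^ 4 = |x| ^ 4 := by
    rw [← abs_pow]; exact (abs_of_nonneg (by positivity)).symm
  have hx4n : (0:ℝ) ≤ x ^ 4 := by positivity
  have hx4b : x ^ 4 ≤ 1/256 := by rw [hx4]; exact h4
  -- monomial bounds
  have hm2 : x ^ 2 ≤ 1/16 := by rw [hx2]; exact h2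
  have hm2n : (0:ℝ) ≤ x ^ 2 := sq_nonneg x
  have hm3 : |x ^ 3| ≤ 1/64 := by rw [abs_pow]; exact h3
  obtain ⟨hm3l, hm3r⟩ := abs_le.1 hm3
  have hm5 : |x ^ 5| ≤ 1/1024 := by
    rw [abs_pow]
    calc |x| ^ 5 ≤ (1/4 : ℝ) ^ 5 := pow_le_pow_left₀ hax hx 5
      _ ≤ 1/1024 := by norm_num
  obtain ⟨hm5l, hm5r⟩ := abs_le.1 hm5
  -- exp remainder
  obtain ⟨r, hrdef⟩ : ∃ r, Real.exp x = 1 + x + x ^ 2 / 2 + x ^ 3 / 6 + r :=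
    ⟨Real.exp x - (1 + x + x ^ 2 / 2 + x ^ 3 / 6), by ring⟩
  have hr : |r| ≤ x ^ 4 := by
    have h := Real.exp_bound (x := x) (by linarith) (n := 4) (by norm_num)
    have hsum : ∑ m ∈ Finset.range 4, x ^ m / (Nat.factorial m)
        = 1 + x + x ^ 2 / 2 + x ^ 3 / 6 := by
      norm_num [Finset.sum_range_succ, Nat.factorial]
    rw [hsum] at h
    have hre : Real.exp x - (1 + x + x ^ 2 / 2 + x ^ 3 / 6) = r := by rw [hrdef]; ring
    rw [hre] at h
    calc |r| ≤ |x| ^ 4 * ((4:ℕ).succ / ((4:ℕ).factorial * (4:ℕ))) := h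
      _ ≤ |x| ^ 4 * 1 := by
          apply mul_le_mul_of_nonneg_left _ (by positivity)
          norm_num [Nat.factorial]
      _ = x ^ 4 := by rw [mul_one, hx4]
  obtain ⟨hrl, hrr⟩ := abs_le.1 hr
  -- the variable u with 1 - p + p e^x = 1 + u
  obtain ⟨v, hv⟩ : ∃ v, v = p * (x + x ^ 2 / 2 + x ^ 3 / 6) := ⟨_, rfl⟩
  obtain ⟨u, hu⟩ : ∃ u, u = v + p * r := ⟨_, rfl⟩
  have hlog_eq : 1 - p + p * Real.exp x = 1 + u := by rw [hu, hv, hrdef]; ring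
  have hvabs : |v| ≤ 3/10 := by
    rw [hv, abs_mul, abs_of_nonneg hp0.le]
    have hPa : |x + x ^ 2 / 2 + x ^ 3 / 6| ≤ 3/10 := by
      rw [abs_le]; constructor <;> linarith
    calc p * |x + x ^ 2 / 2 + x ^ 3 / 6| ≤ 1 * (3/10) :=
          mul_le_mul hp1 hPa (abs_nonneg _) zero_le_one
      _ = 3/10 := by norm_num
  have hpr : |p * r| ≤ x ^ 4 := by
    rw [abs_mul, abs_of_nonneg hp0.le]
    calc p * |r| ≤ 1 * (x ^ 4) := mul_le_mul hp1 hr (abs_nonneg _) zero_le_one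
      _ = x ^ 4 := one_mul _
  have hu_half : |u| ≤ 1/2 := by
    rw [hu]
    calc |v + p * r| ≤ |v| + |p * r| := abs_add_le _ _
      _ ≤ 3/10 + 1/256 := add_le_add hvabs (hpr.trans hx4b)
      _ ≤ 1/2 := by norm_num
  obtain ⟨hu1, hu2⟩ := abs_le.1 hu_half
  obtain ⟨hv1, hv2⟩ := abs_le.1 hvabs
  have hu32 : |u| ≤ 3/2 * |x| := by
    rw [hu]
    have hva : |v| ≤ p * (|x| + |x| ^ 2 / 2 + |x| ^ 3 / 6) := by
      rw [hv, abs_mul, abs_of_nonneg hp0.le]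
      apply mul_le_mul_of_nonneg_left _ hp0.le
      calc |x + x ^ 2 / 2 + x ^ 3 / 6| ≤ |x| + |x ^ 2 / 2| + |x ^ 3 / 6| := abs_add_three _ _ _
        _ ≤ |x| + |x| ^ 2 / 2 + |x| ^ 3 / 6 := by
            rw [abs_div, abs_div, abs_pow, abs_pow]; norm_num
    have hpra : |p * r| ≤ |x| ^ 4 := by rw [← hx4]; exact hpr
    have ha2 : |x| ^ 2 ≤ |x| / 4 := by
      calc |x| ^ 2 = |x| * |x| := sq |x| ▸ by ring
        _ ≤ |x| * (1/4) := mul_le_mul_of_nonneg_left hx hax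
        _ = |x| / 4 := by ring
    have ha3 : |x| ^ 3 ≤ |x| / 16 := by
      calc |x| ^ 3 = |x| * |x| ^ 2 := by ring
        _ ≤ |x| * (1/16) := mul_le_mul_of_nonneg_left h2 hax
        _ = |x| / 16 := by ring
    have ha4 : |x| ^ 4 ≤ |x| / 64 := by
      calc |x| ^ 4 = |x| * |x| ^ 3 := by ring
        _ ≤ |x| * (1/64) := mul_le_mul_of_nonneg_left h3 hax
        _ = |x| / 64 := by ring
    have hX : (0:ℝ) ≤ |x| + |x| ^ 2 / 2 + |x| ^ 3 / 6 := by positivity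
    have hpX : p * (|x| + |x| ^ 2 / 2 + |x| ^ 3 / 6) ≤ 1 * (|x| + |x| ^ 2 / 2 + |x| ^ 3 / 6) :=
      mul_le_mul_of_nonneg_right hp1 hX
    calc |v + p * r| ≤ |v| + |p * r| := abs_add_le _ _
      _ ≤ p * (|x| + |x| ^ 2 / 2 + |x| ^ 3 / 6) + |x| ^ 4 := add_le_add hva hpra
      _ ≤ 3/2 * |x| := by linarith
  have hu4 : |u| ^ 4 ≤ 6 * x ^ 4 := by
    calc |u| ^ 4 ≤ (3/2 * |x|) ^ 4 := pow_le_pow_left₀ (abs_nonneg u) hu32 4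
      _ = 81/16 * |x| ^ 4 := by ring
      _ ≤ 6 * x ^ 4 := by rw [hx4]; linarith only [pow_nonneg hax 4]
  -- log series bound
  have hlogb : |Real.log (1 + u) - (u - u ^ 2 / 2 + u ^ 3 / 3)| ≤ 12 * x ^ 4 := by
    have h := Real.abs_log_sub_add_sum_range_le (x := -u)
      (by rw [abs_neg]; linarith) 3
    have hsum : ∑ i ∈ Finset.range 3, (-u) ^ (i + 1) / (i + 1)
        = -u + u ^ 2 / 2 - u ^ 3 / 3 := by
      norm_num [Finset.sum_range_succ]
      ring
    rw [hsum] at h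
    have h1mu : 1 - -u = 1 + u := by ring
    rw [h1mu, abs_neg] at h
    have hden : 1 - |u| ≥ 1/2 := by linarith
    have hfrac : |u| ^ 4 / (1 - |u|) ≤ 12 * x ^ 4 := by
      calc |u| ^ 4 / (1 - |u|) ≤ |u| ^ 4 / (1/2) :=
            div_le_div_of_nonneg_left (by positivity) (by norm_num) hden
        _ = 2 * |u| ^ 4 := by ring
        _ ≤ 12 * x ^ 4 := by linarith
    have heq : Real.log (1 + u) - (u - u ^ 2 / 2 + u ^ 3 / 3)
        = -u + u ^ 2 / 2 - u ^ 3 / 3 + Real.log (1 + u) := by ring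
    rw [heq]
    exact h.trans hfrac
  -- polynomial part
  obtain ⟨Q, hQ⟩ : ∃ Q, Q = p ^ 2 * (-(7/24) - x/12 - x ^ 2/72)
      + p ^ 3 * (1/2 + 5/12*x + 5/24*x ^ 2 + 5/72*x ^ 3 + 1/72*x ^ 4 + 1/648*x ^ 5) := ⟨_, rfl⟩
  obtain ⟨W, hW⟩ : ∃ W, W = 1 - (u + v) / 2 + (u ^ 2 + u * v + v ^ 2) / 3 := ⟨_, rfl⟩
  have hST : u - u ^ 2 / 2 + u ^ 3 / 3 -
      (p * x + p * (1 - p) / 2 * x ^ 2 + (p / 6 - p ^ 2 / 2 + p ^ 3 / 3) * x ^ 3)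
      = x ^ 4 * Q + p * r * W := by
    rw [hW, hQ, hu, hv]; ring
  have hQ2b : |(-(7/24) - x/12 - x ^ 2/72 : ℝ)| ≤ 1 := by
    rw [abs_le]; constructor <;> linarith
  have hQ3b : |(1/2 + 5/12*x + 5/24*x ^ 2 + 5/72*x ^ 3 + 1/72*x ^ 4 + 1/648*x ^ 5 : ℝ)| ≤ 1 := by
    rw [abs_le]; constructor <;> linarith
  have hp2 : p ^ 2 ≤ 1 := pow_le_one₀ hp0.le hp1
  have hp3 : p ^ 3 ≤ 1 := pow_le_one₀ hp0.le hp1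
  have hQb : |Q| ≤ 2 := by
    rw [hQ]
    calc |p ^ 2 * (-(7/24) - x/12 - x ^ 2/72)
          + p ^ 3 * (1/2 + 5/12*x + 5/24*x ^ 2 + 5/72*x ^ 3 + 1/72*x ^ 4 + 1/648*x ^ 5)|
        ≤ |p ^ 2 * (-(7/24) - x/12 - x ^ 2/72)|
          + |p ^ 3 * (1/2 + 5/12*x + 5/24*x ^ 2 + 5/72*x ^ 3 + 1/72*x ^ 4 + 1/648*x ^ 5)| :=
          abs_add_le _ _
      _ ≤ 1 * 1 + 1 * 1 := by
          apply add_le_add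
          · rw [abs_mul, abs_pow, abs_of_nonneg hp0.le]
            exact mul_le_mul hp2 hQ2b (abs_nonneg _) zero_le_one
          · rw [abs_mul, abs_pow, abs_of_nonneg hp0.le]
            exact mul_le_mul hp3 hQ3b (abs_nonneg _) zero_le_one
      _ ≤ 2 := by norm_num
  have hWb : |W| ≤ 2 := by
    have hu_sq : u ^ 2 ≤ 1/4 := by nlinarith only [hu1, hu2]
    have hv_sq : v ^ 2 ≤ 9/100 := by nlinarith only [hv1, hv2]
    have huv1 : u * v ≤ 1/4 := by nlinarith only [sq_nonneg (u - v), hu_sq, hv_sq]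
    have huv2 : -(1/4) ≤ u * v := by nlinarith only [sq_nonneg (u + v), hu_sq, hv_sq]
    rw [hW, abs_le]
    constructor <;> linarith only [hu1, hu2, hv1, hv2, hu_sq, hv_sq, huv1, huv2,
      sq_nonneg u, sq_nonneg v, sq_nonneg (u + v)]
  have hSTb : |u - u ^ 2 / 2 + u ^ 3 / 3 -
      (p * x + p * (1 - p) / 2 * x ^ 2 + (p / 6 - p ^ 2 / 2 + p ^ 3 / 3) * x ^ 3)| ≤ 4 * x ^ 4 := by
    rw [hST]
    calc |x ^ 4 * Q + p * r * W| ≤ |x ^ 4 * Q| + |p * r * W| := abs_add_le _ _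
      _ ≤ x ^ 4 * 2 + x ^ 4 * 2 := by
          apply add_le_add
          · rw [abs_mul, abs_of_nonneg hx4n]
            exact mul_le_mul_of_nonneg_left hQb hx4n
          · rw [abs_mul]
            exact mul_le_mul hpr hWb (abs_nonneg _) hx4n
      _ = 4 * x ^ 4 := by ring
  -- combine
  rw [hlog_eq]
  calc |Real.log (1 + u) -
      (p * x + p * (1 - p) / 2 * x ^ 2 + (p / 6 - p ^ 2 / 2 + p ^ 3 / 3) * x ^ 3)|
      ≤ |Real.log (1 + u) - (u - u ^ 2 / 2 + u ^ 3 / 3)| + |u - u ^ 2 / 2 + u ^ 3 / 3 -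
          (p * x + p * (1 - p) / 2 * x ^ 2 + (p / 6 - p ^ 2 / 2 + p ^ 3 / 3) * x ^ 3)| :=
        abs_sub_le _ _ _
    _ ≤ 12 * x ^ 4 + 4 * x ^ 4 := add_le_add hlogb hSTb
    _ ≤ 40 * x ^ 4 := by linarith

lemma bern_singleton (N : ℕ) (p : ℝ) (hp0 : 0 < p) (hp1 : p ≤ 1) (ω : Fin N × Fin N → Bool) :
    ((bern N p) {ω}).toReal = ∏ q : Fin N × Fin N, (if ω q then p else 1 - p) := by
  have hmin : min 1 (Real.toNNReal p) = Real.toNNReal p :=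
    min_eq_right (Real.toNNReal_le_one.2 hp1)
  rw [bern, ← Set.univ_pi_singleton, Measure.pi_pi, ENNReal.toReal_prod]
  refine Finset.prod_congr rfl fun q _ => ?_
  rw [PMF.toMeasure_apply_singleton _ _ (measurableSet_singleton _), PMF.bernoulli_apply, hmin]
  cases hω : ω q
  · simp only [Bool.cond_false, Bool.false_eq_true, if_false]
    rw [ENNReal.coe_toReal, NNReal.coe_sub (Real.toNNReal_le_one.2 hp1), NNReal.coe_one,
      Real.coe_toNNReal _ hp0.le]
  · simp only [Bool.cond_true, if_true]
    rw [ENNReal.coe_toReal, Real.coe_toNNReal _ hp0.le]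

lemma integral_factorize (N : ℕ) (p β : ℝ) (hp0 : 0 < p) (hp1 : p ≤ 1) (σ τ : Fin N → Bool) :
    ∫ ω, Real.exp (-β * hamil N p ω σ) * Real.exp (-β * hamil N p ω τ) ∂(bern N p)
      = ∏ q : Fin N × Fin N, (1 - p + p * Real.exp (β / (2 * N * p) *
          (spin (σ q.1) * spin (σ q.2) + spin (τ q.1) * spin (τ q.2)))) := by
  haveI : IsProbabilityMeasure (bern N p) := by
    rw [bern]; infer_instance
  set c : ℝ := β / (2 * N * p) with hc
  set A : Fin N × Fin N → ℝ := fun q => spin (σ q.1) * spin (σ q.2) + spin (τ q.1) * spin (τ q.2)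
    with hA
  have hint : ∀ ω : Fin N × Fin N → Bool,
      Real.exp (-β * hamil N p ω σ) * Real.exp (-β * hamil N p ω τ)
        = ∏ q : Fin N × Fin N, Real.exp ((if ω q then (1:ℝ) else 0) * (c * A q)) := by
    intro ω
    rw [← Real.exp_add, ← Real.exp_sum]
    congr 1
    have h1 : ∀ υ : Fin N → Bool, -β * hamil N p ω υ
        = ∑ q : Fin N × Fin N, (if ω q then (1:ℝ) else 0) * (c * (spin (υ q.1) * spin (υ q.2))) := by
      intro υ
      rw [hamil, Fintype.sum_prod_type]
      rw [Finset.mul_sum, Finset.mul_sum]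
      simp only [Finset.mul_sum]
      refine Finset.sum_congr rfl fun i _ => Finset.sum_congr rfl fun j _ => ?_
      ring
    rw [h1 σ, h1 τ, ← Finset.sum_add_distrib]
    refine Finset.sum_congr rfl fun q _ => ?_
    simp only [hA]
    ring
  calc ∫ ω, Real.exp (-β * hamil N p ω σ) * Real.exp (-β * hamil N p ω τ) ∂(bern N p)
      = ∑ ω : Fin N × Fin N → Bool, ((bern N p) {ω}).toReal •
          ∏ q : Fin N × Fin N, Real.exp ((if ω q then (1:ℝ) else 0) * (c * A q)) := by
        simp_rw [← hint]
        exact integral_fintype (.of_finite)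
    _ = ∑ ω : Fin N × Fin N → Bool, ∏ q : Fin N × Fin N,
          ((if ω q then p else 1 - p) * Real.exp ((if ω q then (1:ℝ) else 0) * (c * A q))) := by
        refine Finset.sum_congr rfl fun ω _ => ?_
        rw [bern_singleton N p hp0 hp1, smul_eq_mul, ← Finset.prod_mul_distrib]
    _ = ∏ q : Fin N × Fin N, ∑ b : Bool,
          ((if b then p else 1 - p) * Real.exp ((if b then (1:ℝ) else 0) * (c * A q))) := by
        rw [Finset.prod_univ_sum fun _ => (Finset.univ : Finset Bool), Fintype.piFinset_univ]
    _ = ∏ q : Fin N × Fin N, (1 - p + p * Real.exp (c * A q)) := by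
        refine Finset.prod_congr rfl fun q _ => ?_
        rw [Fintype.sum_bool]
        simp [add_comm]

/-- **Remark 6.** For fixed `β > 0` and constant `p ∈ (0,1]`,
`log 𝔼[e^{-βH(σ)}e^{-βH(τ)}] = (1-p)β²/(4p) + β(|σ|²+|τ|²)/(2N) + (β²|στ|²/(4N²))(1/p - 1)
  + O(1/N²)((|σ|²+|τ|²)/N + 1)`, uniformly in `σ, τ`. -/
theorem log_expectation_exp_H_pair_const_p (β p : ℝ) (hβ : 0 < β)
    (hp : p ∈ Set.Ioc (0 : ℝ) 1) :
    ∃ C : ℝ, ∀ᶠ N : ℕ in atTop, ∀ σ τ : Fin N → Bool,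
      |Real.log (∫ ω, Real.exp (-β * hamil N p ω σ) *
            Real.exp (-β * hamil N p ω τ) ∂(bern N p))
          - (1 - p) * β ^ 2 / (4 * p)
          - β * ((mag σ) ^ 2 + (mag τ) ^ 2) / (2 * N)
          - β ^ 2 * (magPair σ τ) ^ 2 / (4 * (N : ℝ) ^ 2) * (1 / p - 1)|
        ≤ C / (N : ℝ) ^ 2 * (((mag σ) ^ 2 + (mag τ) ^ 2) / N + 1) := by
  obtain ⟨hp0, hp1⟩ := hp
  refine ⟨40 * β ^ 4 / p ^ 4 + β ^ 3 / p ^ 3, ?_⟩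
  rw [eventually_atTop]
  refine ⟨max 1 (⌈4 * β / p⌉₊ + 1), fun N hN σ τ => ?_⟩
  have hN1 : 1 ≤ N := le_trans (le_max_left _ _) hN
  have hNr : (1:ℝ) ≤ N := by exact_mod_cast hN1
  have hN0 : (N:ℝ) ≠ 0 := by linarith
  have hNpos : (0:ℝ) < N := by linarith
  have hN2 : 4 * β / p ≤ N := by
    have h := le_trans (le_max_right 1 (⌈4 * β / p⌉₊ + 1)) hN
    exact Nat.ceil_le.1 (Nat.le_of_succ_le h)
  have hNp : 4 * β ≤ N * p := by
    rw [div_le_iff₀ hp0] at hN2; linarith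
  set c : ℝ := β / (2 * N * p) with hc
  set A : Fin N × Fin N → ℝ :=
    fun q => spin (σ q.1) * spin (σ q.2) + spin (τ q.1) * spin (τ q.2) with hA
  have hcpos : 0 < c := by
    rw [hc]; positivity
  have hAb : ∀ q, |A q| ≤ 2 := by
    intro q
    rw [hA]
    calc |spin (σ q.1) * spin (σ q.2) + spin (τ q.1) * spin (τ q.2)|
        ≤ |spin (σ q.1) * spin (σ q.2)| + |spin (τ q.1) * spin (τ q.2)| := abs_add_le _ _
      _ ≤ 2 := by rw [abs_mul, abs_mul, abs_spin, abs_spin, abs_spin, abs_spin]; norm_num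
  have hxs : ∀ q, |c * A q| ≤ 1/4 := by
    intro q
    rw [abs_mul, abs_of_nonneg hcpos.le]
    calc c * |A q| ≤ c * 2 := mul_le_mul_of_nonneg_left (hAb q) hcpos.le
      _ = β / (N * p) := by rw [hc]; ring
      _ ≤ 1/4 := by
          rw [div_le_iff₀ (by positivity)]
          linarith
  have hI : ∫ ω, Real.exp (-β * hamil N p ω σ) * Real.exp (-β * hamil N p ω τ) ∂(bern N p)
      = ∏ q : Fin N × Fin N, (1 - p + p * Real.exp (c * A q)) :=
    integral_factorize N p β hp0 hp1 σ τ
  have hpos : ∀ q : Fin N × Fin N, 0 < 1 - p + p * Real.exp (c * A q) := by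
    intro q
    have := Real.exp_pos (c * A q)
    nlinarith
  have hlog : Real.log (∏ q : Fin N × Fin N, (1 - p + p * Real.exp (c * A q)))
      = ∑ q : Fin N × Fin N, Real.log (1 - p + p * Real.exp (c * A q)) :=
    Real.log_prod fun q _ => (hpos q).ne'
  have hsq : ∀ (υ : Fin N → Bool),
      ∑ q : Fin N × Fin N, spin (υ q.1) * spin (υ q.2) = mag υ ^ 2 := by
    intro υ
    rw [Fintype.sum_prod_type, mag, sq, Finset.sum_mul_sum]
  have hcross : ∑ q : Fin N × Fin N,
      (spin (σ q.1) * spin (τ q.1)) * (spin (σ q.2) * spin (τ q.2)) = magPair σ τ ^ 2 := by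
    rw [Fintype.sum_prod_type, magPair, sq, Finset.sum_mul_sum]
  have hA1 : ∑ q : Fin N × Fin N, A q = mag σ ^ 2 + mag τ ^ 2 := by
    rw [hA, Finset.sum_add_distrib, hsq σ, hsq τ]
  have hcard : (Finset.univ : Finset (Fin N × Fin N)).card = N * N := by
    simp [Finset.card_univ]
  have hA2 : ∑ q : Fin N × Fin N, A q ^ 2 = 2 * (N:ℝ)^2 + 2 * magPair σ τ ^ 2 := by
    have e2 : ∀ q : Fin N × Fin N, A q ^ 2
        = 2 + 2 * ((spin (σ q.1) * spin (τ q.1)) * (spin (σ q.2) * spin (τ q.2))) := by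
      intro q
      have h1 := spin_mul_self (σ q.1)
      have h2 := spin_mul_self (σ q.2)
      have h3 := spin_mul_self (τ q.1)
      have h4 := spin_mul_self (τ q.2)
      rw [hA]
      linear_combination (spin (σ q.2) * spin (σ q.2)) * h1 + h2
        + (spin (τ q.2) * spin (τ q.2)) * h3 + h4
    rw [Finset.sum_congr rfl fun q _ => e2 q, Finset.sum_add_distrib, Finset.sum_const, hcard,
      ← Finset.mul_sum, hcross]
    push_cast
    ring
  have hA3 : ∑ q : Fin N × Fin N, A q ^ 3 = 4 * (mag σ ^ 2 + mag τ ^ 2) := by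
    have e3 : ∀ q : Fin N × Fin N, A q ^ 3 = 4 * A q := by
      intro q
      have h1 : (spin (σ q.1) * spin (σ q.2)) * (spin (σ q.1) * spin (σ q.2)) = 1 := by
        have a1 := spin_mul_self (σ q.1); have a2 := spin_mul_self (σ q.2)
        linear_combination (spin (σ q.2) * spin (σ q.2)) * a1 + a2
      have h2 : (spin (τ q.1) * spin (τ q.2)) * (spin (τ q.1) * spin (τ q.2)) = 1 := by
        have a1 := spin_mul_self (τ q.1); have a2 := spin_mul_self (τ q.2)
        linear_combination (spin (τ q.2) * spin (τ q.2)) * a1 + a2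
      rw [hA]
      linear_combination (spin (σ q.1) * spin (σ q.2) + 3 * (spin (τ q.1) * spin (τ q.2))) * h1
        + (3 * (spin (σ q.1) * spin (σ q.2)) + spin (τ q.1) * spin (τ q.2)) * h2
    rw [Finset.sum_congr rfl fun q _ => e3 q, ← Finset.mul_sum, hA1]
  set d : ℝ := p/6 - p^2/2 + p^3/3 with hd
  set L : Fin N × Fin N → ℝ := fun q => Real.log (1 - p + p * Real.exp (c * A q)) with hL
  set E : Fin N × Fin N → ℝ :=
    fun q => p * (c * A q) + p * (1 - p) / 2 * (c * A q) ^ 2 + d * (c * A q) ^ 3 with hE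
  have htay : ∀ q, |L q - E q| ≤ 40 * (c * A q) ^ 4 :=
    fun q => taylor_log_aux p (c * A q) hp0 hp1 (hxs q)
  have hx2c : ∀ q, |c * A q| ≤ 2 * c := by
    intro q
    rw [abs_mul, abs_of_nonneg hcpos.le]
    calc c * |A q| ≤ c * 2 := mul_le_mul_of_nonneg_left (hAb q) hcpos.le
      _ = 2 * c := by ring
  have hx4c : ∀ q, (c * A q) ^ 4 ≤ 16 * c ^ 4 := by
    intro q
    have h1 : |c * A q| ^ 4 ≤ (2 * c) ^ 4 :=
      pow_le_pow_left₀ (abs_nonneg _) (hx2c q) 4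
    have h2 : (c * A q) ^ 4 = |c * A q| ^ 4 := by
      rw [← abs_pow]; exact (abs_of_nonneg (by positivity)).symm
    rw [h2]
    calc |c * A q| ^ 4 ≤ (2 * c) ^ 4 := h1
      _ = 16 * c ^ 4 := by ring
  have hS0 : (0:ℝ) ≤ mag σ ^ 2 + mag τ ^ 2 := by positivity
  have hlin : ∑ q : Fin N × Fin N, E q
      = p * c * (mag σ ^ 2 + mag τ ^ 2)
        + p * (1 - p) / 2 * c ^ 2 * (2 * (N:ℝ) ^ 2 + 2 * magPair σ τ ^ 2)
        + d * c ^ 3 * (4 * (mag σ ^ 2 + mag τ ^ 2)) := by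
    rw [← hA3, ← hA2, ← hA1, Finset.mul_sum, Finset.mul_sum, Finset.mul_sum,
      ← Finset.sum_add_distrib, ← Finset.sum_add_distrib]
    exact Finset.sum_congr rfl fun q _ => by rw [hE]; ring
  have htarget : p * c * (mag σ ^ 2 + mag τ ^ 2)
        + p * (1 - p) / 2 * c ^ 2 * (2 * (N:ℝ) ^ 2 + 2 * magPair σ τ ^ 2)
      = (1 - p) * β ^ 2 / (4 * p) + β * ((mag σ) ^ 2 + (mag τ) ^ 2) / (2 * N)
        + β ^ 2 * (magPair σ τ) ^ 2 / (4 * (N : ℝ) ^ 2) * (1 / p - 1) := by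
    rw [hc]
    field_simp
    ring
  have heq : (∑ q : Fin N × Fin N, L q)
      - (1 - p) * β ^ 2 / (4 * p)
      - β * ((mag σ) ^ 2 + (mag τ) ^ 2) / (2 * N)
      - β ^ 2 * (magPair σ τ) ^ 2 / (4 * (N : ℝ) ^ 2) * (1 / p - 1)
      = (∑ q : Fin N × Fin N, (L q - E q))
        + d * c ^ 3 * (4 * (mag σ ^ 2 + mag τ ^ 2)) := by
    rw [Finset.sum_sub_distrib, hlin]
    linear_combination htarget
  have hsum1 : |∑ q : Fin N × Fin N, (L q - E q)| ≤ (N:ℝ) ^ 2 * (640 * c ^ 4) := by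
    calc |∑ q : Fin N × Fin N, (L q - E q)| ≤ ∑ q : Fin N × Fin N, |L q - E q| :=
          Finset.abs_sum_le_sum_abs _ _
      _ ≤ ∑ _q : Fin N × Fin N, 640 * c ^ 4 := by
          apply Finset.sum_le_sum
          intro q _
          calc |L q - E q| ≤ 40 * (c * A q) ^ 4 := htay q
            _ ≤ 40 * (16 * c ^ 4) := by
                have := hx4c q
                linarith
            _ = 640 * c ^ 4 := by ring
      _ = (N:ℝ) ^ 2 * (640 * c ^ 4) := by
          rw [Finset.sum_const, hcard]
          push_cast
          ring
  have hdb : |d| ≤ 1 := by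
    have hp2 : p ^ 2 ≤ 1 := pow_le_one₀ hp0.le hp1
    have hp3 : p ^ 3 ≤ 1 := pow_le_one₀ hp0.le hp1
    have hp2n : 0 ≤ p ^ 2 := sq_nonneg p
    have hp3n : 0 ≤ p ^ 3 := by positivity
    rw [hd, abs_le]
    constructor <;> linarith
  have hsum2 : |d * c ^ 3 * (4 * (mag σ ^ 2 + mag τ ^ 2))|
      ≤ c ^ 3 * (4 * (mag σ ^ 2 + mag τ ^ 2)) := by
    rw [abs_mul, abs_mul]
    have h1 : |c ^ 3| = c ^ 3 := abs_of_nonneg (by positivity)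
    have h2 : |4 * (mag σ ^ 2 + mag τ ^ 2)| = 4 * (mag σ ^ 2 + mag τ ^ 2) :=
      abs_of_nonneg (by linarith)
    rw [h1, h2]
    calc |d| * c ^ 3 * (4 * (mag σ ^ 2 + mag τ ^ 2))
        ≤ 1 * c ^ 3 * (4 * (mag σ ^ 2 + mag τ ^ 2)) := by
          apply mul_le_mul_of_nonneg_right _ (by linarith)
          apply mul_le_mul_of_nonneg_right hdb (by positivity)
      _ = c ^ 3 * (4 * (mag σ ^ 2 + mag τ ^ 2)) := by ring
  rw [hI, hlog]
  have hc4 : (N:ℝ) ^ 2 * (640 * c ^ 4) = (40 * β ^ 4 / p ^ 4) / (N:ℝ) ^ 2 := by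
    rw [hc]
    field_simp
    ring
  have hc3 : c ^ 3 * (4 * (mag σ ^ 2 + mag τ ^ 2))
      = (β ^ 3 / p ^ 3) / 2 * ((mag σ ^ 2 + mag τ ^ 2) / (N:ℝ) ^ 3) := by
    rw [hc]
    field_simp
    ring
  have hb3 : (0:ℝ) < β ^ 3 / p ^ 3 := by positivity
  have hb4 : (0:ℝ) < β ^ 4 / p ^ 4 := by positivity
  have e1 : (40 * β ^ 4 / p ^ 4) / (N:ℝ) ^ 2
      ≤ (40 * β ^ 4 / p ^ 4 + β ^ 3 / p ^ 3) / (N:ℝ) ^ 2 := by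
    gcongr
    linarith
  have e2 : (β ^ 3 / p ^ 3) / 2 * ((mag σ ^ 2 + mag τ ^ 2) / (N:ℝ) ^ 3)
      ≤ (40 * β ^ 4 / p ^ 4 + β ^ 3 / p ^ 3) * (mag σ ^ 2 + mag τ ^ 2) / (N:ℝ) ^ 3 := by
    have h0 : (0:ℝ) ≤ (mag σ ^ 2 + mag τ ^ 2) / (N:ℝ) ^ 3 := by positivity
    calc (β ^ 3 / p ^ 3) / 2 * ((mag σ ^ 2 + mag τ ^ 2) / (N:ℝ) ^ 3)
        ≤ (40 * β ^ 4 / p ^ 4 + β ^ 3 / p ^ 3) * ((mag σ ^ 2 + mag τ ^ 2) / (N:ℝ) ^ 3) := by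
          apply mul_le_mul_of_nonneg_right _ h0
          have hb4' : (0:ℝ) < 40 * β ^ 4 / p ^ 4 := by positivity
          linarith
      _ = (40 * β ^ 4 / p ^ 4 + β ^ 3 / p ^ 3) * (mag σ ^ 2 + mag τ ^ 2) / (N:ℝ) ^ 3 := by
          ring
  have hgoal_eq : (40 * β ^ 4 / p ^ 4 + β ^ 3 / p ^ 3) / (N:ℝ) ^ 2
        * ((mag σ ^ 2 + mag τ ^ 2) / N + 1)
      = (40 * β ^ 4 / p ^ 4 + β ^ 3 / p ^ 3) * (mag σ ^ 2 + mag τ ^ 2) / (N:ℝ) ^ 3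
        + (40 * β ^ 4 / p ^ 4 + β ^ 3 / p ^ 3) / (N:ℝ) ^ 2 := by
    field_simp
  calc |(∑ q : Fin N × Fin N, L q)
      - (1 - p) * β ^ 2 / (4 * p)
      - β * ((mag σ) ^ 2 + (mag τ) ^ 2) / (2 * N)
      - β ^ 2 * (magPair σ τ) ^ 2 / (4 * (N : ℝ) ^ 2) * (1 / p - 1)|
      = |(∑ q : Fin N × Fin N, (L q - E q))
          + d * c ^ 3 * (4 * (mag σ ^ 2 + mag τ ^ 2))| := by rw [heq]
    _ ≤ |∑ q : Fin N × Fin N, (L q - E q)|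
          + |d * c ^ 3 * (4 * (mag σ ^ 2 + mag τ ^ 2))| := abs_add_le _ _
    _ ≤ (N:ℝ) ^ 2 * (640 * c ^ 4) + c ^ 3 * (4 * (mag σ ^ 2 + mag τ ^ 2)) :=
        add_le_add hsum1 hsum2
    _ = (40 * β ^ 4 / p ^ 4) / (N:ℝ) ^ 2
          + (β ^ 3 / p ^ 3) / 2 * ((mag σ ^ 2 + mag τ ^ 2) / (N:ℝ) ^ 3) := by
        rw [hc4, hc3]
    _ ≤ (40 * β ^ 4 / p ^ 4 + β ^ 3 / p ^ 3) / (N:ℝ) ^ 2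
          + (40 * β ^ 4 / p ^ 4 + β ^ 3 / p ^ 3) * (mag σ ^ 2 + mag τ ^ 2) / (N:ℝ) ^ 3 := by
        linarith
    _ = (40 * β ^ 4 / p ^ 4 + β ^ 3 / p ^ 3) / (N:ℝ) ^ 2
          * ((mag σ ^ 2 + mag τ ^ 2) / N + 1) := by
        rw [hgoal_eq]; ring
end
end

section
/- Fix β ∈ (0,1) and let p = p(N) ∈ (0,1] be a sequence with p(N)·N → ∞. Let T_N^c := {σ ∈ {-1,+1}^N : |σ|² > N²p} and A_N(β) := -β²/8 + N²p(cosh(β/(2Np)) - 1). Then Σ_{σ∈T_N^c} E[e^{-βH(σ)}] = o(2^N e^{A_N(β)}) as N → ∞; that is, 2^{-N} e^{-A_N(β)} Σ_{σ∈T_N^c} E[e^{-βH(σ)}] → 0. -/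
open MeasureTheory ProbabilityTheory Filter
open scoped Classical

noncomputable section

@[simp] lemma spin_true : spin true = 1 := rfl
@[simp] lemma spin_false : spin false = -1 := rfl

lemma exp_spin (b : ℝ) (s t : Bool) :
    Real.exp (b * (spin s * spin t)) = Real.cosh b + Real.sinh b * (spin s * spin t) := by
  cases s <;> cases t <;>
    simp [Real.cosh_eq, Real.sinh_eq] <;> ring_nf <;>
    simp [Real.cosh_eq, Real.sinh_eq] <;> ring

lemma exp_hamil_eq (N : ℕ) (pp β : ℝ) (ω : Fin N × Fin N → Bool) (σ : Fin N → Bool) :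
    Real.exp (-β * hamil N pp ω σ) =
      ∏ q : Fin N × Fin N,
        Real.exp (if ω q then β / (2 * N * pp) * (spin (σ q.1) * spin (σ q.2)) else 0) := by
  rw [← Real.exp_sum]
  congr 1
  have h1 : -β * hamil N pp ω σ
      = ∑ i : Fin N, ∑ j : Fin N, (β / (2 * N * pp)) *
          ((if ω (i, j) then (1:ℝ) else 0) * (spin (σ i) * spin (σ j))) := by
    rw [hamil, Finset.mul_sum, Finset.mul_sum]
    simp only [Finset.mul_sum]
    refine Finset.sum_congr rfl fun i _ => Finset.sum_congr rfl fun j _ => by ring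
  rw [h1, Fintype.sum_prod_type]
  refine Finset.sum_congr rfl fun i _ => Finset.sum_congr rfl fun j _ => ?_
  by_cases h : ω (i, j) <;> simp [h]

lemma sum_pi_bool_prod {ι : Type*} [Fintype ι] {fB : Fintype (ι → Bool)} (F : ι → Bool → ℝ) :
    ∑ x ∈ (@Finset.univ _ fB), ∏ i, F i (x i) = ∏ i, (F i true + F i false) := by
  classical
  rw [Subsingleton.elim fB (Pi.instFintype)]
  rw [← Fintype.piFinset_univ, Finset.sum_prod_piFinset]
  refine Finset.prod_congr rfl fun i _ => ?_
  rw [Fintype.sum_bool]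

lemma integral_exp_hamil (N : ℕ) (pp β : ℝ) (hp0 : 0 < pp) (hp1 : pp ≤ 1) (σ : Fin N → Bool) :
    ∫ ω, Real.exp (-β * hamil N pp ω σ) ∂(bern N pp)
      = ∏ q : Fin N × Fin N,
          (1 - pp + pp * Real.exp (β / (2 * N * pp) * (spin (σ q.1) * spin (σ q.2)))) := by
  have hmin : min 1 (Real.toNNReal pp) = Real.toNNReal pp :=
    min_eq_right (Real.toNNReal_le_one.mpr hp1)
  haveI : IsProbabilityMeasure (bern N pp) := by unfold bern; infer_instance
  rw [integral_fintype (Integrable.of_finite)]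
  have hsing : ∀ ω : Fin N × Fin N → Bool,
      (bern N pp).real {ω} = ∏ q : Fin N × Fin N, (if ω q then pp else 1 - pp) := by
    intro ω
    show ((bern N pp) {ω}).toReal = _
    rw [bern, ← Set.univ_pi_singleton ω, Measure.pi_pi, ENNReal.toReal_prod]
    refine Finset.prod_congr rfl fun q _ => ?_
    rw [PMF.toMeasure_apply_singleton _ _ (measurableSet_singleton _), PMF.bernoulli_apply, hmin]
    cases ω q
    · simp only [Bool.cond_false, Bool.false_eq_true, if_false]
      rw [ENNReal.coe_toReal, NNReal.coe_sub (Real.toNNReal_le_one.mpr hp1), NNReal.coe_one,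
        Real.coe_toNNReal _ hp0.le]
    · simp only [Bool.cond_true, if_true]
      rw [ENNReal.coe_toReal]
      exact Real.coe_toNNReal _ hp0.le
  simp only [hsing, exp_hamil_eq N pp β, smul_eq_mul, ← Finset.prod_mul_distrib]
  refine (sum_pi_bool_prod (fun (q : Fin N × Fin N) (b : Bool) => (if b then pp else 1 - pp) *
      Real.exp (if b then β / (2 * ↑N * pp) * (spin (σ q.1) * spin (σ q.2)) else 0))).trans ?_
  refine Finset.prod_congr rfl fun q _ => ?_
  simp only [if_true, if_false, Bool.false_eq_true]
  rw [Real.exp_zero]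
  ring

lemma integral_exp_hamil_le (N : ℕ) (pp β : ℝ) (hp0 : 0 < pp) (hp1 : pp ≤ 1)
    (σ : Fin N → Bool) :
    ∫ ω, Real.exp (-β * hamil N pp ω σ) ∂(bern N pp)
      ≤ Real.exp ((N:ℝ)^2 * pp * (Real.cosh (β / (2*N*pp)) - 1)
          + pp * Real.sinh (β / (2*N*pp)) * (mag σ)^2) := by
  set b : ℝ := β / (2*N*pp) with hbdef
  rw [integral_exp_hamil N pp β hp0 hp1 σ]
  have key : ∑ q : Fin N × Fin N, (spin (σ q.1) * spin (σ q.2)) = (mag σ)^2 := by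
    rw [Fintype.sum_prod_type, sq, mag, Finset.sum_mul_sum]
  have card2 : (Fintype.card (Fin N × Fin N) : ℝ) = (N:ℝ)^2 := by
    simp [Fintype.card_prod, sq]
  calc ∏ q : Fin N × Fin N, (1 - pp + pp * Real.exp (b * (spin (σ q.1) * spin (σ q.2))))
      ≤ ∏ q : Fin N × Fin N,
          Real.exp (pp * (Real.exp (b * (spin (σ q.1) * spin (σ q.2))) - 1)) := by
        refine Finset.prod_le_prod (fun q _ => ?_) (fun q _ => ?_)
        · have h1 : 0 < pp * Real.exp (b * (spin (σ q.1) * spin (σ q.2))) :=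
            mul_pos hp0 (Real.exp_pos _)
          linarith
        · have h2 := Real.add_one_le_exp (pp * (Real.exp (b * (spin (σ q.1) * spin (σ q.2))) - 1))
          linarith
    _ = Real.exp (∑ q : Fin N × Fin N,
          pp * (Real.exp (b * (spin (σ q.1) * spin (σ q.2))) - 1)) := (Real.exp_sum _ _).symm
    _ = Real.exp ((N:ℝ)^2 * pp * (Real.cosh b - 1) + pp * Real.sinh b * (mag σ)^2) := by
        congr 1
        simp only [exp_spin]
        have expand : ∀ q : Fin N × Fin N,
            pp * (Real.cosh b + Real.sinh b * (spin (σ q.1) * spin (σ q.2)) - 1)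
              = pp * (Real.cosh b - 1)
                + (pp * Real.sinh b) * (spin (σ q.1) * spin (σ q.2)) := fun q => by ring
        rw [Finset.sum_congr rfl (fun q _ => expand q), Finset.sum_add_distrib,
          Finset.sum_const, ← Finset.mul_sum, key, Finset.card_univ, nsmul_eq_mul, card2]
        ring

lemma integrable_gauss_lin (a : ℝ) :
    Integrable (fun x : ℝ => Real.exp (a * x - x ^ 2 / 2)) := by
  have h : ∀ x : ℝ, Real.exp (a * x - x ^ 2 / 2)
      = Real.exp (a ^ 2 / 2) * Real.exp (-(1/2 : ℝ) * (x - a) ^ 2) := by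
    intro x; rw [← Real.exp_add]; ring_nf
  simp only [h]
  exact ((integrable_exp_neg_mul_sq (by norm_num : (0:ℝ) < 1/2)).comp_sub_right a).const_mul _

lemma gauss_lin (a : ℝ) : ∫ x : ℝ, Real.exp (a * x - x ^ 2 / 2)
    = Real.sqrt (2 * Real.pi) * Real.exp (a ^ 2 / 2) := by
  have h : ∀ x : ℝ, Real.exp (a * x - x ^ 2 / 2)
      = Real.exp (a ^ 2 / 2) * Real.exp (-(1/2 : ℝ) * (x - a) ^ 2) := by
    intro x; rw [← Real.exp_add]; ring_nf
  simp only [h]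
  rw [integral_const_mul]
  rw [show (∫ x : ℝ, Real.exp (-(1/2 : ℝ) * (x - a) ^ 2))
      = ∫ x : ℝ, Real.exp (-(1/2 : ℝ) * x ^ 2) from
    integral_sub_right_eq_self (fun y => Real.exp (-(1/2 : ℝ) * y ^ 2)) a]
  rw [integral_gaussian]
  rw [show Real.pi / (1/2 : ℝ) = 2 * Real.pi by ring]
  ring

lemma sum_exp_mag_sq_le (N : ℕ) (hN : 0 < N) (t : ℝ) (ht0 : 0 ≤ t) (ht1 : t < 1) :
    ∑ σ : Fin N → Bool, Real.exp (t * (mag σ) ^ 2 / (2 * N))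
      ≤ 2 ^ N / Real.sqrt (1 - t) := by
  have hNR : (0:ℝ) < N := by exact_mod_cast hN
  set κ : ℝ := Real.sqrt (t / N) with hκdef
  have hκ2 : κ ^ 2 = t / N := Real.sq_sqrt (div_nonneg ht0 hNR.le)
  have h2π : (0:ℝ) < Real.sqrt (2 * Real.pi) :=
    Real.sqrt_pos.mpr (by positivity)
  have hA : ∀ σ : Fin N → Bool, Real.exp (t * (mag σ) ^ 2 / (2 * N))
      = (Real.sqrt (2 * Real.pi))⁻¹ * ∫ x : ℝ, Real.exp (κ * mag σ * x - x ^ 2 / 2) := by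
    intro σ
    rw [gauss_lin (κ * mag σ), ← mul_assoc, inv_mul_cancel₀ h2π.ne', one_mul, mul_pow, hκ2]
    congr 1
    field_simp
  have hC : ∀ x : ℝ, ∑ σ : Fin N → Bool, Real.exp (κ * mag σ * x - x ^ 2 / 2)
      = (2 * Real.cosh (κ * x)) ^ N * Real.exp (-x ^ 2 / 2) := by
    intro x
    have h1 : ∀ σ : Fin N → Bool, Real.exp (κ * mag σ * x - x ^ 2 / 2)
        = (∏ i : Fin N, Real.exp (κ * x * spin (σ i))) * Real.exp (-x ^ 2 / 2) := by
      intro σ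
      rw [← Real.exp_sum, ← Real.exp_add]
      congr 1
      rw [mag, Finset.mul_sum, Finset.sum_mul]
      rw [show (∑ i : Fin N, κ * spin (σ i) * x) = ∑ i : Fin N, κ * x * spin (σ i) from
        Finset.sum_congr rfl fun i _ => by ring]
      ring
    simp only [h1]
    rw [← Finset.sum_mul]
    congr 1
    rw [sum_pi_bool_prod (fun (i : Fin N) (b : Bool) => Real.exp (κ * x * spin b))]
    simp only [spin_true, spin_false]
    rw [Finset.prod_const, Finset.card_univ, Fintype.card_fin]
    congr 1
    rw [Real.cosh_eq, mul_one, mul_neg_one]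
    ring
  have hD : ∀ x : ℝ, (2 * Real.cosh (κ * x)) ^ N * Real.exp (-x ^ 2 / 2)
      ≤ (2:ℝ) ^ N * Real.exp (-((1 - t) / 2) * x ^ 2) := by
    intro x
    have h1 : Real.cosh (κ * x) ≤ Real.exp ((κ * x) ^ 2 / 2) := Real.cosh_le_exp_half_sq _
    have h2 : (2 * Real.cosh (κ * x)) ^ N ≤ (2 * Real.exp ((κ * x) ^ 2 / 2)) ^ N := by
      refine pow_le_pow_left₀ (by positivity) (by linarith) N
    calc (2 * Real.cosh (κ * x)) ^ N * Real.exp (-x ^ 2 / 2)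
        ≤ (2 * Real.exp ((κ * x) ^ 2 / 2)) ^ N * Real.exp (-x ^ 2 / 2) := by
          exact mul_le_mul_of_nonneg_right h2 (Real.exp_nonneg _)
      _ = (2:ℝ) ^ N * Real.exp (-((1 - t) / 2) * x ^ 2) := by
          rw [mul_pow, ← Real.exp_nat_mul, mul_assoc, ← Real.exp_add]
          congr 1
          rw [mul_pow, hκ2]
          field_simp
          ring
  have hsum : ∑ σ : Fin N → Bool, Real.exp (t * (mag σ) ^ 2 / (2 * N))
      = (Real.sqrt (2 * Real.pi))⁻¹ *
        ∫ x : ℝ, ∑ σ : Fin N → Bool, Real.exp (κ * mag σ * x - x ^ 2 / 2) := by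
    simp only [hA]
    rw [← Finset.mul_sum]
    congr 1
    exact (integral_finset_sum _ (fun σ _ => integrable_gauss_lin _)).symm
  rw [hsum]
  have hint1 : Integrable (fun x : ℝ => ∑ σ : Fin N → Bool,
      Real.exp (κ * mag σ * x - x ^ 2 / 2)) :=
    integrable_finset_sum _ (fun σ _ => integrable_gauss_lin _)
  have hint2 : Integrable (fun x : ℝ => (2:ℝ) ^ N * Real.exp (-((1 - t) / 2) * x ^ 2)) :=
    (integrable_exp_neg_mul_sq (by linarith : (0:ℝ) < (1 - t) / 2)).const_mul _
  have hle : (∫ x : ℝ, ∑ σ : Fin N → Bool, Real.exp (κ * mag σ * x - x ^ 2 / 2))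
      ≤ ∫ x : ℝ, (2:ℝ) ^ N * Real.exp (-((1 - t) / 2) * x ^ 2) :=
    integral_mono hint1 hint2 (fun x => by rw [hC x]; exact hD x)
  have hR : (∫ x : ℝ, (2:ℝ) ^ N * Real.exp (-((1 - t) / 2) * x ^ 2))
      = (2:ℝ) ^ N * Real.sqrt (Real.pi / ((1 - t) / 2)) := by
    rw [integral_const_mul, integral_gaussian]
  rw [hR] at hle
  calc (Real.sqrt (2 * Real.pi))⁻¹ *
        ∫ x : ℝ, ∑ σ : Fin N → Bool, Real.exp (κ * mag σ * x - x ^ 2 / 2)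
      ≤ (Real.sqrt (2 * Real.pi))⁻¹ * ((2:ℝ) ^ N * Real.sqrt (Real.pi / ((1 - t) / 2))) := by
        exact mul_le_mul_of_nonneg_left hle (by positivity)
    _ = 2 ^ N / Real.sqrt (1 - t) := by
        rw [div_div_eq_mul_div, mul_comm Real.pi 2]
        rw [Real.sqrt_div (by positivity : (0:ℝ) ≤ 2 * Real.pi) (1 - t)]
        field_simp

lemma sinh_le_mul_exp {y : ℝ} (hy : 0 ≤ y) : Real.sinh y ≤ y * Real.exp y := by
  rw [Real.sinh_eq]
  have k1 : Real.exp (-y) = Real.exp y * Real.exp (-(2*y)) := by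
    rw [← Real.exp_add]; ring_nf
  have k2 : -(2*y) + 1 ≤ Real.exp (-(2*y)) := Real.add_one_le_exp _
  have k3 := mul_le_mul_of_nonneg_left k2 (Real.exp_pos y).le
  nlinarith [Real.exp_pos y]

lemma main_bound (N : ℕ) (β pp : ℝ) (hN : 1 ≤ N) (hβ0 : 0 < β) (hβ1 : β < 1)
    (hp0 : 0 < pp) (hp1 : pp ≤ 1)
    (hE : Real.exp (β / (2 * ((N:ℝ) * pp))) ≤ 1 + (1 - β) / (4 * β)) :
    (∑ σ ∈ Finset.univ.filter
        (fun σ : Fin N → Bool => (N : ℝ) ^ 2 * pp < (mag σ) ^ 2),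
      ∫ ω, Real.exp (-β * hamil N pp ω σ) ∂(bern N pp)) /
      (2 ^ N * Real.exp (-β ^ 2 / 8 + (N : ℝ) ^ 2 * pp * (Real.cosh (β / (2 * N * pp)) - 1)))
    ≤ (Real.exp (β ^ 2 / 8) / Real.sqrt (1 - (1 + β) / 2))
        * Real.exp (-((1 - β) / 8) * ((N:ℝ) * pp)) := by
  have hNR : (0:ℝ) < N := by exact_mod_cast Nat.lt_of_lt_of_le Nat.zero_lt_one hN
  set b : ℝ := β / (2 * N * pp) with hbdef
  have hb0 : 0 < b := by positivity
  set t : ℝ := (1 + β) / 2 with htdef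
  have ht0 : 0 ≤ t := by positivity
  have ht1 : t < 1 := by rw [htdef]; linarith
  have hEb : Real.exp b ≤ 1 + (1 - β) / (4 * β) := by
    have : β / (2 * ((N:ℝ) * pp)) = b := by rw [hbdef]; ring_nf
    rwa [this] at hE
  -- bound on pp * sinh b
  have hc : pp * Real.sinh b ≤ (β + (1 - β) / 4) / (2 * N) := by
    have h1 : pp * Real.sinh b ≤ pp * (b * Real.exp b) :=
      mul_le_mul_of_nonneg_left (sinh_le_mul_exp hb0.le) hp0.le
    have h2 : pp * (b * Real.exp b) = (β * Real.exp b) / (2 * N) := by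
      rw [hbdef]; field_simp
    have h3 : β * Real.exp b ≤ β * (1 + (1 - β) / (4 * β)) :=
      mul_le_mul_of_nonneg_left hEb hβ0.le
    have h4 : β * (1 + (1 - β) / (4 * β)) = β + (1 - β) / 4 := by field_simp
    rw [h2] at h1
    refine h1.trans ?_
    rw [← h4]
    have h2N : (0:ℝ) < 2 * N := by positivity
    exact (div_le_div_iff_of_pos_right h2N).mpr h3
  -- lambda lower bound
  have hlam : (1 - β) / (8 * N) ≤ t / (2 * N) - pp * Real.sinh b := by
    have key : t / (2 * N) - (β + (1 - β) / 4) / (2 * N) = (1 - β) / (8 * N) := by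
      rw [htdef]; field_simp; ring
    linarith
  have hlam0 : 0 ≤ t / (2 * N) - pp * Real.sinh b :=
    le_trans (div_nonneg (by linarith) (by positivity)) hlam
  -- per-sigma bound
  have hterm : ∀ σ : Fin N → Bool, (N : ℝ) ^ 2 * pp < (mag σ) ^ 2 →
      (∫ ω, Real.exp (-β * hamil N pp ω σ) ∂(bern N pp))
        ≤ Real.exp ((N:ℝ)^2 * pp * (Real.cosh b - 1) - ((1 - β) / 8) * ((N:ℝ) * pp))
            * Real.exp (t * (mag σ) ^ 2 / (2 * N)) := by
    intro σ hσ
    refine (integral_exp_hamil_le N pp β hp0 hp1 σ).trans ?_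
    rw [← Real.exp_add]
    apply Real.exp_le_exp.mpr
    have hm2 : (N:ℝ) ^ 2 * pp ≤ (mag σ) ^ 2 := hσ.le
    have h5 : (t / (2 * N) - pp * Real.sinh b) * ((N:ℝ) ^ 2 * pp)
        ≤ (t / (2 * N) - pp * Real.sinh b) * (mag σ) ^ 2 :=
      mul_le_mul_of_nonneg_left hm2 hlam0
    have h6 : ((1 - β) / (8 * N)) * ((N:ℝ) ^ 2 * pp)
        ≤ (t / (2 * N) - pp * Real.sinh b) * ((N:ℝ) ^ 2 * pp) :=
      mul_le_mul_of_nonneg_right hlam (by positivity)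
    have h7 : ((1 - β) / (8 * N)) * ((N:ℝ) ^ 2 * pp) = ((1 - β) / 8) * ((N:ℝ) * pp) := by
      field_simp
    have h8 : (t / (2 * N) - pp * Real.sinh b) * (mag σ) ^ 2
        = t * (mag σ) ^ 2 / (2 * N) - pp * Real.sinh b * (mag σ) ^ 2 := by ring
    linarith
  -- numerator bound
  have hK0 : 0 ≤ Real.exp ((N:ℝ)^2 * pp * (Real.cosh b - 1) - ((1 - β) / 8) * ((N:ℝ) * pp)) :=
    (Real.exp_pos _).le
  have hNum : (∑ σ ∈ Finset.univ.filter
        (fun σ : Fin N → Bool => (N : ℝ) ^ 2 * pp < (mag σ) ^ 2),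
      ∫ ω, Real.exp (-β * hamil N pp ω σ) ∂(bern N pp))
      ≤ Real.exp ((N:ℝ)^2 * pp * (Real.cosh b - 1) - ((1 - β) / 8) * ((N:ℝ) * pp))
          * (2 ^ N / Real.sqrt (1 - t)) := by
    calc (∑ σ ∈ Finset.univ.filter
          (fun σ : Fin N → Bool => (N : ℝ) ^ 2 * pp < (mag σ) ^ 2),
        ∫ ω, Real.exp (-β * hamil N pp ω σ) ∂(bern N pp))
        ≤ ∑ σ ∈ Finset.univ.filter
            (fun σ : Fin N → Bool => (N : ℝ) ^ 2 * pp < (mag σ) ^ 2),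
          Real.exp ((N:ℝ)^2 * pp * (Real.cosh b - 1) - ((1 - β) / 8) * ((N:ℝ) * pp))
            * Real.exp (t * (mag σ) ^ 2 / (2 * N)) := by
          refine Finset.sum_le_sum fun σ hσ => hterm σ ?_
          exact (Finset.mem_filter.mp hσ).2
      _ = Real.exp ((N:ℝ)^2 * pp * (Real.cosh b - 1) - ((1 - β) / 8) * ((N:ℝ) * pp))
            * ∑ σ ∈ Finset.univ.filter
              (fun σ : Fin N → Bool => (N : ℝ) ^ 2 * pp < (mag σ) ^ 2),
              Real.exp (t * (mag σ) ^ 2 / (2 * N)) := by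
          rw [Finset.mul_sum]
      _ ≤ Real.exp ((N:ℝ)^2 * pp * (Real.cosh b - 1) - ((1 - β) / 8) * ((N:ℝ) * pp))
            * ∑ σ : Fin N → Bool, Real.exp (t * (mag σ) ^ 2 / (2 * N)) := by
          refine mul_le_mul_of_nonneg_left ?_ hK0
          exact Finset.sum_le_sum_of_subset_of_nonneg (Finset.filter_subset _ _)
            (fun σ _ _ => (Real.exp_pos _).le)
      _ ≤ Real.exp ((N:ℝ)^2 * pp * (Real.cosh b - 1) - ((1 - β) / 8) * ((N:ℝ) * pp))
            * (2 ^ N / Real.sqrt (1 - t)) := by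
          refine mul_le_mul_of_nonneg_left ?_ hK0
          exact sum_exp_mag_sq_le N (Nat.lt_of_lt_of_le Nat.zero_lt_one hN) t ht0 ht1
  -- final division
  have hs : (0:ℝ) < Real.sqrt (1 - t) := Real.sqrt_pos.mpr (by linarith)
  rw [div_le_iff₀ (by positivity)]
  refine hNum.trans (le_of_eq ?_)
  rw [Real.exp_sub, Real.exp_add, neg_mul, Real.exp_neg, neg_div, Real.exp_neg]
  field_simp

/-- **Step 1 of the proof of Theorem 3 (atypical configurations).** For `0 < β < 1` and
`p = p(N)` with `pN → ∞`, with `T_N^c = {σ : |σ|² > N²p}` and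
`A_N(β) = -β²/8 + N²p(cosh(β/(2Np)) - 1)`, one has
`∑_{σ ∈ T_N^c} 𝔼 e^{-βH(σ)} = o(2^N e^{A_N(β)})`. -/
theorem atypical_sum_small (β : ℝ) (hβ : β ∈ Set.Ioo (0 : ℝ) 1)
    (p : ℕ → ℝ) (hp : ∀ N, p N ∈ Set.Ioc (0 : ℝ) 1)
    (hpN : Tendsto (fun N : ℕ => p N * (N : ℝ)) atTop atTop) :
    Tendsto (fun N : ℕ =>
        (∑ σ ∈ Finset.univ.filter
            (fun σ : Fin N → Bool => (N : ℝ) ^ 2 * p N < (mag σ) ^ 2),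
          ∫ ω, Real.exp (-β * hamil N (p N) ω σ) ∂(bern N (p N))) /
        (2 ^ N * Real.exp (-β ^ 2 / 8 +
            (N : ℝ) ^ 2 * p N * (Real.cosh (β / (2 * N * p N)) - 1))))
      atTop (nhds 0) := by
  obtain ⟨hβ0, hβ1⟩ := hβ
  have hx : Tendsto (fun N : ℕ => (N:ℝ) * p N) atTop atTop := by
    refine hpN.congr fun N => mul_comm _ _
  -- upper comparison function tends to zero
  have hupper : Tendsto (fun N : ℕ =>
      (Real.exp (β ^ 2 / 8) / Real.sqrt (1 - (1 + β) / 2))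
        * Real.exp (-((1 - β) / 8) * ((N:ℝ) * p N))) atTop (nhds 0) := by
    have h1 : Tendsto (fun N : ℕ => -((1 - β) / 8) * ((N:ℝ) * p N)) atTop atBot := by
      refine Tendsto.const_mul_atTop_of_neg ?_ hx
      have : (0:ℝ) < (1 - β) / 8 := by linarith
      linarith
    have h2 := Real.tendsto_exp_atBot.comp h1
    have h3 := h2.const_mul (Real.exp (β ^ 2 / 8) / Real.sqrt (1 - (1 + β) / 2))
    simpa using h3
  -- eventual hypotheses
  have hev1 : ∀ᶠ N : ℕ in atTop, 1 ≤ N := eventually_ge_atTop 1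
  have hev2 : ∀ᶠ N : ℕ in atTop,
      Real.exp (β / (2 * ((N:ℝ) * p N))) ≤ 1 + (1 - β) / (4 * β) := by
    have hden : Tendsto (fun N : ℕ => 2 * ((N:ℝ) * p N)) atTop atTop :=
      hx.const_mul_atTop two_pos
    have hfrac : Tendsto (fun N : ℕ => β / (2 * ((N:ℝ) * p N))) atTop (nhds 0) :=
      Tendsto.div_atTop tendsto_const_nhds hden
    have hexp : Tendsto (fun N : ℕ => Real.exp (β / (2 * ((N:ℝ) * p N)))) atTop (nhds 1) := by
      have := (Real.continuous_exp.tendsto 0).comp hfrac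
      simpa [Function.comp_def] using this
    refine hexp.eventually (eventually_le_nhds ?_)
    have : 0 < (1 - β) / (4 * β) := div_pos (by linarith) (by positivity)
    linarith
  refine tendsto_of_tendsto_of_tendsto_of_le_of_le' tendsto_const_nhds hupper ?_ ?_
  · filter_upwards with N
    refine div_nonneg ?_ (by positivity)
    exact Finset.sum_nonneg fun σ _ => integral_nonneg fun ω => (Real.exp_pos _).le
  · filter_upwards [hev1, hev2] with N h1 h2
    exact main_bound N β (p N) h1 hβ0 hβ1 (hp N).1 (hp N).2 h2
end
end
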